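/- Let Z_1, Z_2, ... be i.i.d. standard normal random variables, n > 0, 1 ≤ a ≤ n/e, and U_n(a) = Σ_{i≥1} Z_i^2/(a·e^{i/a} + n). Then Var(n·U_n(a)/(a·log(n/a))) ≤ K_1/(a·log(n/a)) for a universal constant K_1 > 0. -/

import Mathlib

open MeasureTheory ProbabilityTheory Real Filter
open scoped ENNReal NNReal

noncomputable def gaussM2 : ℝ := ∫ x, x^2 ∂(gaussianReal 0 1)
noncomputable def gaussV : ℝ := ∫ x, (x^2 - gaussM2)^2 ∂(gaussianReal 0 1)

lemma gaussV_nonneg : 0 ≤ gaussV := integral_nonneg fun x => sq_nonneg _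

lemma gauss_int_pow (k : ℕ) : Integrable (fun x : ℝ => x ^ k) (gaussianReal 0 1) := by
  rw [gaussianReal_of_var_ne_zero _ one_ne_zero]
  rw [integrable_withDensity_iff (measurable_gaussianPDF 0 1)
    (Filter.Eventually.of_forall fun x => ENNReal.ofReal_lt_top)]
  have h : Integrable (fun x : ℝ => x ^ (k:ℝ) * Real.exp (-(1/2) * x ^ 2)) :=
    integrable_rpow_mul_exp_neg_mul_sq (by norm_num)
      (lt_of_lt_of_le (by norm_num) (Nat.cast_nonneg k))
  have h2 := h.const_mul ((Real.sqrt (2 * π * 1))⁻¹)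
  refine h2.congr (Filter.Eventually.of_forall fun x => ?_)
  beta_reduce
  rw [gaussianPDF_def, ENNReal.toReal_ofReal (gaussianPDFReal_nonneg 0 1 x),
    gaussianPDFReal_def, Real.rpow_natCast]
  push_cast
  ring_nf

lemma gauss_memℒp_sq : MemLp (fun x : ℝ => x^2) 2 (gaussianReal 0 1) := by
  rw [memLp_two_iff_integrable_sq
    ((by fun_prop : Measurable (fun x : ℝ => x ^ 2)).aestronglyMeasurable)]
  have := gauss_int_pow 4
  refine this.congr (Filter.Eventually.of_forall fun x => ?_)
  simp [← pow_mul]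

lemma gauss_memℒp_centered : MemLp (fun x : ℝ => x^2 - gaussM2) 2 (gaussianReal 0 1) :=
  gauss_memℒp_sq.sub (memLp_const _)
set_option maxHeartbeats 1000000 in

lemma analytic {n a : ℝ} (ha : 1 ≤ a) (hae : a ≤ n / Real.exp 1) :
    Summable (fun i : ℕ => (a * Real.exp (((i:ℝ)+1)/a) + n)⁻¹) ∧
    Summable (fun i : ℕ => ((a * Real.exp (((i:ℝ)+1)/a) + n)⁻¹)^2) ∧
    ∑' i : ℕ, ((a * Real.exp (((i:ℝ)+1)/a) + n)⁻¹)^2 ≤ 4 * a * Real.log (n/a) / n^2 := by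
  have ha0 : (0:ℝ) < a := lt_of_lt_of_le one_pos ha
  have hae' : a * Real.exp 1 ≤ n := by
    rwa [le_div_iff₀ (Real.exp_pos 1)] at hae
  have hn : (0:ℝ) < n := by nlinarith [Real.exp_pos 1]
  have hna : Real.exp 1 ≤ n / a := by
    rw [le_div_iff₀ ha0, mul_comm]; exact hae'
  set L := Real.log (n/a) with hLdef
  have hL : 1 ≤ L := by
    rw [hLdef, Real.le_log_iff_exp_le (by positivity)]; simpa using hna
  have haL : 1 ≤ a * L := by nlinarith
  set c : ℕ → ℝ := fun i => (a * Real.exp (((i:ℝ)+1)/a) + n)⁻¹ with hcdef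
  have hd_pos : ∀ i : ℕ, 0 < a * Real.exp (((i:ℝ)+1)/a) + n := fun i => by positivity
  have hc_pos : ∀ i, 0 < c i := fun i => inv_pos.mpr (hd_pos i)
  have hc_le_n : ∀ i, c i ≤ n⁻¹ := fun i => by
    apply inv_anti₀ hn
    nlinarith [Real.exp_pos (((i:ℝ)+1)/a)]
  set r : ℝ := Real.exp (-a⁻¹) with hrdef
  have hr0 : 0 < r := Real.exp_pos _
  have hr1 : r < 1 := Real.exp_lt_one_iff.mpr (neg_lt_zero.mpr (inv_pos.mpr ha0))
  have hc_le_exp : ∀ i : ℕ, c i ≤ a⁻¹ * r ^ (i+1) := by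
    intro i
    have h1 : r ^ (i+1) = Real.exp (-(((i:ℝ)+1)/a)) := by
      rw [hrdef, ← Real.exp_nat_mul]
      congr 1
      push_cast
      ring
    have h2 : c i ≤ (a * Real.exp (((i:ℝ)+1)/a))⁻¹ := by
      apply inv_anti₀ (by positivity)
      nlinarith
    rw [h1, Real.exp_neg]
    rwa [mul_inv] at h2
  have hgeo : Summable (fun i : ℕ => r ^ i) := summable_geometric_of_lt_one hr0.le hr1
  have hg : Summable (fun i : ℕ => a⁻¹ * r ^ (i+1)) := by
    refine ((hgeo.mul_left (a⁻¹ * r)).congr fun i => ?_)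
    ring
  have hc_sum : Summable c :=
    Summable.of_nonneg_of_le (fun i => (hc_pos i).le) hc_le_exp hg
  set N : ℕ := ⌈a * L⌉₊ with hNdef
  have hN_ge : a * L ≤ (N:ℝ) := Nat.le_ceil _
  have hN_le : (N:ℝ) ≤ a * L + 1 := (Nat.ceil_lt_add_one (by positivity)).le
  have hrN : r ^ N ≤ a / n := by
    have h1 : r ^ N = Real.exp ((N:ℝ) * -a⁻¹) := by rw [hrdef, Real.exp_nat_mul]
    have h2 : (N:ℝ) * -a⁻¹ ≤ -L := by
      nlinarith [mul_nonneg (sub_nonneg.mpr hN_ge) (inv_pos.mpr ha0).le,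
        mul_inv_cancel₀ ha0.ne']
    have h3 : Real.exp (-L) = a / n := by
      rw [Real.exp_neg, hLdef, Real.exp_log (by positivity), inv_div]
    rw [h1, ← h3]
    exact Real.exp_le_exp.mpr h2
  have hr_le : r ≤ 1 - (2*a)⁻¹ := by
    set t : ℝ := (2*a)⁻¹ with htdef
    have ht0 : 0 < t := by positivity
    have ht : t ≤ 1/2 := by
      rw [htdef]
      rw [inv_le_comm₀ (by positivity) (by norm_num)]
      linarith
    have hexp : 1 + t ≤ Real.exp t := by linarith [Real.add_one_le_exp t]
    have hrt : r = ((Real.exp t)^2)⁻¹ := by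
      rw [hrdef, Real.exp_neg]
      congr 1
      rw [sq, ← Real.exp_add]
      congr 1
      rw [htdef]
      field_simp
      norm_num
    have h2 : (1:ℝ) ≤ (1 - t) * (1 + t)^2 := by
      nlinarith [ht0, ht, mul_nonneg ht0.le ht0.le,
        mul_nonneg (mul_nonneg ht0.le ht0.le) ht0.le]
    have h3 : ((Real.exp t)^2)⁻¹ ≤ ((1+t)^2)⁻¹ :=
      inv_anti₀ (by positivity) (by nlinarith)
    have h4 : ((1+t)^2)⁻¹ ≤ 1 - t := by
      have hu : ((1+t)^2)⁻¹ * (1+t)^2 = 1 := inv_mul_cancel₀ (by positivity)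
      nlinarith [hu, h2, sq_nonneg (1+t)]
    rw [hrt]; linarith
  have h1r : (1 - r)⁻¹ ≤ 2*a := by
    have h0 : (2*a)⁻¹ ≤ 1 - r := by linarith
    calc (1-r)⁻¹ ≤ ((2*a)⁻¹)⁻¹ := inv_anti₀ (by positivity) h0
      _ = 2*a := inv_inv _
  have htail_sum : Summable (fun i : ℕ => c (i + N)) := (summable_nat_add_iff N).mpr hc_sum
  have hgN : Summable (fun i : ℕ => a⁻¹ * r ^ (i + N + 1)) := by
    refine (hgeo.mul_left (a⁻¹ * r ^ (N+1))).congr fun i => ?_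
    rw [show i + N + 1 = (N + 1) + i from by ring, pow_add]
    ring
  have htail : ∑' i : ℕ, c (i + N) ≤ 2 * a / n := by
    have h1 : ∑' i : ℕ, c (i + N) ≤ ∑' i : ℕ, a⁻¹ * r ^ (i + N + 1) := by
      exact Summable.tsum_le_tsum (fun i => hc_le_exp (i + N)) htail_sum hgN
    have h2 : ∑' i : ℕ, a⁻¹ * r ^ (i + N + 1) = a⁻¹ * r^(N+1) * (1-r)⁻¹ := by
      rw [← tsum_geometric_of_lt_one hr0.le hr1, ← tsum_mul_left]
      congr 1
      ext i
      rw [show i + N + 1 = (N+1) + i by ring, pow_add]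
      ring
    have h3 : a⁻¹ * r^(N+1) * (1-r)⁻¹ ≤ a⁻¹ * (a/n) * (2*a) := by
      have hrN1 : r^(N+1) ≤ a/n := by
        calc r^(N+1) = r^N * r := pow_succ r N
          _ ≤ r^N * 1 := mul_le_mul_of_nonneg_left hr1.le (pow_nonneg hr0.le N)
          _ = r^N := mul_one _
          _ ≤ a/n := hrN
      have e1 : a⁻¹ * r^(N+1) ≤ a⁻¹ * (a/n) :=
        mul_le_mul_of_nonneg_left hrN1 (by positivity)
      have e2 : (0:ℝ) ≤ (1-r)⁻¹ := inv_nonneg.mpr (by linarith)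
      exact mul_le_mul e1 h1r e2 (by positivity)
    have h4 : a⁻¹ * (a/n) * (2*a) = 2*a/n := by
      field_simp
    linarith
  have hhead : ∑ i ∈ Finset.range N, c i ≤ N / n := by
    calc ∑ i ∈ Finset.range N, c i ≤ ∑ _i ∈ Finset.range N, n⁻¹ :=
        Finset.sum_le_sum (fun i _ => hc_le_n i)
      _ = N * n⁻¹ := by simp [Finset.sum_const, Finset.card_range, nsmul_eq_mul]
      _ = N / n := by rw [div_eq_mul_inv]
  have hc_tsum : ∑' i, c i ≤ 4 * a * L / n := by
    rw [← Summable.sum_add_tsum_nat_add N hc_sum]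
    have hfin : (N:ℝ)/n + 2*a/n ≤ 4*a*L/n := by
      rw [← add_div, div_le_div_iff_of_pos_right hn]
      linarith [haL, hN_le, mul_nonneg ha0.le (sub_nonneg.mpr hL)]
    linarith
  have hcsq_le : ∀ i, (c i)^2 ≤ n⁻¹ * c i := fun i => by
    nlinarith [hc_pos i, hc_le_n i]
  have hcsq_sum : Summable (fun i => (c i)^2) :=
    Summable.of_nonneg_of_le (fun i => sq_nonneg _) hcsq_le (hc_sum.mul_left n⁻¹)
  refine ⟨hc_sum, hcsq_sum, ?_⟩
  calc ∑' i, (c i)^2 ≤ ∑' i, n⁻¹ * c i := Summable.tsum_le_tsum hcsq_le hcsq_sum (hc_sum.mul_left _)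
    _ = n⁻¹ * ∑' i, c i := tsum_mul_left
    _ ≤ n⁻¹ * (4*a*L/n) := by
        apply mul_le_mul_of_nonneg_left hc_tsum (by positivity)
    _ = 4*a*L/n^2 := by field_simp

set_option maxHeartbeats 1000000 in
/-- For `Z_i` i.i.d. standard normal, `1 ≤ a ≤ n/e`, and
`U_n(a) = Σ_{i≥1} Z_i²/(a e^{i/a}+n)`:
`Var(n·U_n(a)/(a·log(n/a))) ≤ K₁/(a·log(n/a))` for a universal constant `K₁ > 0`. -/
theorem stmt10 :
    ∃ K₁ : ℝ, 0 < K₁ ∧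
      ∀ (Ω : Type) [MeasurableSpace Ω] (μ : Measure Ω) [IsProbabilityMeasure μ]
        (Z : ℕ → Ω → ℝ), (∀ i, Measurable (Z i)) →
        iIndepFun Z μ →
        (∀ i, Measure.map (Z i) μ = gaussianReal 0 1) →
        ∀ n a : ℝ, 1 ≤ a → a ≤ n / Real.exp 1 →
        variance (fun ω =>
            n * (∑' i : ℕ, (Z i ω) ^ 2 / (a * Real.exp (((i : ℝ) + 1) / a) + n)) /
              (a * Real.log (n / a))) μ ≤
          K₁ / (a * Real.log (n / a)) := by
  refine ⟨4 * gaussV + 1, by nlinarith [gaussV_nonneg], ?_⟩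
  intro Ω mΩ μ hμ Z hZm hindep hmap n a ha hae
  obtain ⟨hc_sum, hcsq_sum, hcsq_bound⟩ := analytic ha hae
  have ha0 : (0:ℝ) < a := lt_of_lt_of_le one_pos ha
  have hae' : a * Real.exp 1 ≤ n := by rwa [le_div_iff₀ (Real.exp_pos 1)] at hae
  have hn : (0:ℝ) < n := by nlinarith [Real.exp_pos 1]
  have hL : 1 ≤ Real.log (n/a) := by
    rw [Real.le_log_iff_exp_le (by positivity), le_div_iff₀ ha0, mul_comm]
    exact hae'
  set L := Real.log (n/a) with hLdef
  have hL0 : (0:ℝ) < L := lt_of_lt_of_le one_pos hL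
  have haL : (0:ℝ) < a * L := by positivity
  set c : ℕ → ℝ := fun i => (a * Real.exp (((i:ℝ)+1)/a) + n)⁻¹ with hcdef
  have hc_pos : ∀ i, 0 < c i := fun i => by
    rw [hcdef]; positivity
  -- per-index facts
  have hgmeas : Measurable (fun x : ℝ => x^2) := by fun_prop
  have hZsq_mem : ∀ i, MemLp (fun ω => (Z i ω)^2) 2 μ := fun i => by
    have h2 : MemLp (fun x : ℝ => x^2) 2 (Measure.map (Z i) μ) := by
      rw [hmap i]; exact gauss_memℒp_sq
    have h : MemLp ((fun x : ℝ => x^2) ∘ Z i) 2 μ :=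
      (memLp_map_measure_iff hgmeas.aestronglyMeasurable (hZm i).aemeasurable).mp h2
    exact h
  have hcent_mem : ∀ i, MemLp (fun ω => (Z i ω)^2 - gaussM2) 2 μ :=
    fun i => (hZsq_mem i).sub (memLp_const _)
  set Y : ℕ → Ω → ℝ := fun i ω => c i * ((Z i ω)^2 - gaussM2) with hYdef
  have hY_mem : ∀ i, MemLp (Y i) 2 μ := fun i => (hcent_mem i).const_mul (c i)
  have hZsq_int : ∀ i, ∫ ω, (Z i ω)^2 ∂μ = gaussM2 := fun i => by
    have h := integral_map (hZm i).aemeasurable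
      (hgmeas.aestronglyMeasurable (μ := Measure.map (Z i) μ))
    rw [hmap i] at h
    rw [show gaussM2 = ∫ x, x^2 ∂(gaussianReal 0 1) from rfl, h]
  have hcent2_int : ∀ i, ∫ ω, ((Z i ω)^2 - gaussM2)^2 ∂μ = gaussV := fun i => by
    have hg2 : Measurable (fun x : ℝ => (x^2 - gaussM2)^2) := by fun_prop
    have h := integral_map (hZm i).aemeasurable
      (hg2.aestronglyMeasurable (μ := Measure.map (Z i) μ))
    rw [hmap i] at h
    rw [show gaussV = ∫ x, (x^2 - gaussM2)^2 ∂(gaussianReal 0 1) from rfl, h]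
  have hEY : ∀ i, ∫ ω, Y i ω ∂μ = 0 := fun i => by
    rw [hYdef]
    simp only
    rw [integral_const_mul,
      integral_sub ((hZsq_mem i).integrable one_le_two) (integrable_const _),
      hZsq_int i]
    simp
  have hVarY : ∀ i, variance (Y i) μ = (c i)^2 * gaussV := fun i => by
    rw [variance_eq_sub (hY_mem i)]
    have h1 : μ[(Y i)^2] = (c i)^2 * gaussV := by
      have : (Y i)^2 = fun ω => (c i)^2 * ((Z i ω)^2 - gaussM2)^2 := by
        funext ω
        simp [hYdef, mul_pow]
      rw [this, integral_const_mul, hcent2_int i]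
    have h2 : μ[Y i] = 0 := hEY i
    rw [h1, h2]
    ring
  have hYindep : ∀ i j, i ≠ j → IndepFun (Y i) (Y j) μ := fun i j hij => by
    have h := (hindep.indepFun hij).comp
      (show Measurable (fun x : ℝ => c i * (x^2 - gaussM2)) by fun_prop)
      (show Measurable (fun x : ℝ => c j * (x^2 - gaussM2)) by fun_prop)
    exact h
  set S : ℕ → Ω → ℝ := fun N => ∑ i ∈ Finset.range N, Y i with hSdef
  have hS_mem : ∀ N, MemLp (S N) 2 μ := fun N => memLp_finset_sum' _ (fun i _ => hY_mem i)
  have hVarS : ∀ N, variance (S N) μ ≤ gaussV * ∑' i, (c i)^2 := fun N => by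
    rw [hSdef]
    rw [IndepFun.variance_sum (fun i _ => hY_mem i)
      (fun i _ j _ hij => hYindep i j hij)]
    calc ∑ i ∈ Finset.range N, variance (Y i) μ
        = ∑ i ∈ Finset.range N, gaussV * (c i)^2 := by
          refine Finset.sum_congr rfl fun i _ => ?_
          rw [hVarY i]; ring
      _ = gaussV * ∑ i ∈ Finset.range N, (c i)^2 := by rw [Finset.mul_sum]
      _ ≤ gaussV * ∑' i, (c i)^2 := by
          apply mul_le_mul_of_nonneg_left _ gaussV_nonneg
          exact Summable.sum_le_tsum _ (fun i _ => sq_nonneg _) hcsq_sum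
  have hES : ∀ N, ∫ ω, S N ω ∂μ = 0 := fun N => by
    rw [hSdef]
    simp only [Finset.sum_apply]
    rw [integral_finset_sum _ (fun i _ => (hY_mem i).integrable one_le_two)]
    simp [hEY]
  have hIntS2 : ∀ N, ∫ ω, (S N ω)^2 ∂μ ≤ gaussV * ∑' i, (c i)^2 := fun N => by
    have h := variance_eq_sub (hS_mem N)
    have h0 : μ[S N] = 0 := hES N
    rw [h0] at h
    have he : μ[(S N)^2] = ∫ ω, (S N ω)^2 ∂μ := rfl
    rw [he] at h
    have := hVarS N
    simp only [ne_eq, OfNat.ofNat_ne_zero, not_false_eq_true, zero_pow, sub_zero] at h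
    linarith
  -- integrability of the series terms
  set F : ℕ → Ω → ℝ := fun i ω => (Z i ω)^2 * c i with hFdef
  have hF_int : ∀ i, Integrable (F i) μ := fun i =>
    ((hZsq_mem i).integrable one_le_two).mul_const (c i)
  have hF_nonneg : ∀ i ω, 0 ≤ F i ω := fun i ω => mul_nonneg (sq_nonneg _) (hc_pos i).le
  have hF_integral : ∀ i, ∫ ω, F i ω ∂μ = gaussM2 * c i := fun i => by
    rw [hFdef]
    simp only
    rw [integral_mul_const, hZsq_int i]
  have hgm2_nonneg : 0 ≤ gaussM2 := by
    rw [show gaussM2 = ∫ x, x^2 ∂(gaussianReal 0 1) from rfl]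
    exact integral_nonneg fun x => sq_nonneg x
  have hlint_each : ∀ i, ∫⁻ ω, ‖F i ω‖₊ ∂μ = ENNReal.ofReal (gaussM2 * c i) := fun i => by
    rw [← hF_integral i, ofReal_integral_eq_lintegral_ofReal (hF_int i)
      (Filter.Eventually.of_forall fun ω => hF_nonneg i ω)]
    refine lintegral_congr fun ω => ?_
    exact Real.enorm_eq_ofReal (hF_nonneg i ω)
  have hlint_sum : ∑' i, ∫⁻ ω, ‖F i ω‖₊ ∂μ ≠ ⊤ := by
    have he : ∑' i, ∫⁻ ω, ‖F i ω‖₊ ∂μ = ∑' i, ENNReal.ofReal (gaussM2 * c i) :=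
      tsum_congr hlint_each
    rw [he, ← ENNReal.ofReal_tsum_of_nonneg
      (fun i => mul_nonneg hgm2_nonneg (hc_pos i).le) (hc_sum.mul_left gaussM2)]
    exact ENNReal.ofReal_ne_top
  have hT_integral : ∫ ω, (∑' i, F i ω) ∂μ = gaussM2 * ∑' i, c i := by
    rw [integral_tsum (fun i => (hF_int i).aestronglyMeasurable) hlint_sum]
    rw [tsum_congr hF_integral]
    exact tsum_mul_left
  have hFmeas : ∀ i, Measurable (F i) := fun i => ((hZm i).pow_const 2).mul_const (c i)
  have hae_sum : ∀ᵐ ω ∂μ, Summable fun i => F i ω := by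
    have hG : ∫⁻ ω, (∑' i, (‖F i ω‖₊ : ℝ≥0∞)) ∂μ ≠ ⊤ := by
      rw [lintegral_tsum (f := fun i ω => (‖F i ω‖₊ : ℝ≥0∞)) (fun i => (hFmeas i).enorm.aemeasurable)]
      exact hlint_sum
    have h2 := ae_lt_top' (AEMeasurable.ennreal_tsum
      (fun i => (hFmeas i).enorm.aemeasurable)) hG
    filter_upwards [h2] with ω hω
    have h3 := ENNReal.summable_toReal hω.ne
    simp only [ENNReal.coe_toReal, coe_nnnorm, toReal_enorm] at h3
    exact h3.of_norm
  -- the target random variable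
  set k : ℝ := n / (a * L) with hkdef
  set X : Ω → ℝ := fun ω =>
    n * (∑' i : ℕ, (Z i ω) ^ 2 / (a * Real.exp (((i : ℝ) + 1) / a) + n)) / (a * L) with hXdef
  have hXeq : ∀ ω, X ω = k * (∑' i, F i ω) := fun ω => by
    rw [hXdef, hkdef, hFdef]
    simp only
    rw [mul_div_right_comm]
    congr 1
  have hEX : μ[X] = k * (gaussM2 * ∑' i, c i) := by
    calc μ[X] = ∫ ω, k * (∑' i, F i ω) ∂μ :=
          integral_congr_ae (Filter.Eventually.of_forall hXeq)
      _ = k * ∫ ω, (∑' i, F i ω) ∂μ := integral_const_mul _ _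
      _ = k * (gaussM2 * ∑' i, c i) := by rw [hT_integral]
  have hSmeas : ∀ N, Measurable (S N) := fun N => by
    have he : S N = fun ω => ∑ i ∈ Finset.range N, c i * ((Z i ω)^2 - gaussM2) := by
      funext ω
      rw [hSdef]
      simp [Finset.sum_apply, hYdef]
    rw [he]
    exact Finset.measurable_sum _
      fun i _ => (((hZm i).pow_const 2).sub_const gaussM2).const_mul (c i)
  have hkey : ∀ᵐ ω ∂μ, ENNReal.ofReal ((X ω - μ[X])^2)
      = Filter.liminf (fun N => ENNReal.ofReal ((S N ω)^2 * k^2)) Filter.atTop := by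
    filter_upwards [hae_sum] with ω hω
    have h1 : Filter.Tendsto (fun N => ∑ i ∈ Finset.range N, F i ω)
        Filter.atTop (nhds (∑' i, F i ω)) := hω.hasSum.tendsto_sum_nat
    have h2 : Filter.Tendsto (fun N => ∑ i ∈ Finset.range N, c i)
        Filter.atTop (nhds (∑' i, c i)) := hc_sum.hasSum.tendsto_sum_nat
    have hSN : ∀ N, S N ω = ∑ i ∈ Finset.range N, F i ω
        - gaussM2 * ∑ i ∈ Finset.range N, c i := fun N => by
      rw [hSdef]
      simp only [Finset.sum_apply]
      rw [Finset.mul_sum, ← Finset.sum_sub_distrib]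
      refine Finset.sum_congr rfl fun i _ => ?_
      rw [hYdef, hFdef]
      ring
    have h3 : Filter.Tendsto (fun N => S N ω) Filter.atTop
        (nhds (∑' i, F i ω - gaussM2 * ∑' i, c i)) :=
      ((h1.sub ((h2.const_mul gaussM2)))).congr fun N => (hSN N).symm
    have h4 : Filter.Tendsto (fun N => ENNReal.ofReal ((S N ω)^2 * k^2)) Filter.atTop
        (nhds (ENNReal.ofReal ((∑' i, F i ω - gaussM2 * ∑' i, c i)^2 * k^2))) :=
      (ENNReal.continuous_ofReal.tendsto _).comp ((h3.pow 2).mul_const _)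
    rw [h4.liminf_eq]
    congr 1
    rw [hXeq ω, hEX]
    ring
  have hbound : ∀ N, ∫⁻ ω, ENNReal.ofReal ((S N ω)^2 * k^2) ∂μ
      ≤ ENNReal.ofReal ((4*gaussV+1)/(a*L)) := fun N => by
    rw [← ofReal_integral_eq_lintegral_ofReal (((hS_mem N).integrable_sq).mul_const _)
      (Filter.Eventually.of_forall fun ω => mul_nonneg (sq_nonneg _) (sq_nonneg _))]
    apply ENNReal.ofReal_le_ofReal
    rw [integral_mul_const]
    have h2 : (∫ ω, (S N ω)^2 ∂μ) * k^2 ≤ (gaussV * (4*a*L/n^2)) * k^2 := by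
      apply mul_le_mul_of_nonneg_right _ (sq_nonneg k)
      calc ∫ ω, (S N ω)^2 ∂μ ≤ gaussV * ∑' i, (c i)^2 := hIntS2 N
        _ ≤ gaussV * (4*a*L/n^2) := mul_le_mul_of_nonneg_left hcsq_bound gaussV_nonneg
    have h3 : (gaussV * (4*a*L/n^2)) * k^2 = 4*gaussV/(a*L) := by
      rw [hkdef]
      field_simp
    have h4 : 4*gaussV/(a*L) ≤ (4*gaussV+1)/(a*L) := by
      rw [div_le_div_iff_of_pos_right haL]
      linarith
    linarith
  rw [variance]
  apply ENNReal.toReal_le_of_le_ofReal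
    (div_nonneg (by nlinarith [gaussV_nonneg]) haL.le)
  rw [evariance_eq_lintegral_ofReal]
  calc ∫⁻ ω, ENNReal.ofReal ((X ω - μ[X])^2) ∂μ
      = ∫⁻ ω, Filter.liminf (fun N => ENNReal.ofReal ((S N ω)^2 * k^2)) Filter.atTop ∂μ :=
        lintegral_congr_ae hkey
    _ ≤ Filter.liminf (fun N => ∫⁻ ω, ENNReal.ofReal ((S N ω)^2 * k^2) ∂μ) Filter.atTop := by
        exact lintegral_liminf_le fun N =>
          ENNReal.measurable_ofReal.comp (((hSmeas N).pow_const 2).mul_const _)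
    _ ≤ ENNReal.ofReal ((4*gaussV+1)/(a*L)) := by
        calc Filter.liminf (fun N => ∫⁻ ω, ENNReal.ofReal ((S N ω)^2 * k^2) ∂μ) Filter.atTop
            ≤ Filter.liminf (fun _ => ENNReal.ofReal ((4*gaussV+1)/(a*L))) Filter.atTop :=
              Filter.liminf_le_liminf (Filter.Eventually.of_forall hbound)
          _ = ENNReal.ofReal ((4*gaussV+1)/(a*L)) := Filter.liminf_const _
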